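/- arXiv:2111.12050 — 3 statements merged into one kernel-verified Lean document; each statement's English description precedes it below -/
import Mathlib

section
/- Let (Δ_t)_{t≥0} be a sequence of nonnegative reals with Δ₀ = 0, and suppose for every t ≥ 1 there is ε_t ∈ {0,1} such that Δ_t² ≤ (1+p)^{ε_t} Δ_{t−1}² + c²(1 + ε_t/p) for all p > 0 (the same ε_t works for all p), where c > 0. Then, choosing p = 1/Σ_{j=1}^T ε_j, we have Δ_T² ≤ e c² (T + (Σ_{j=1}^T ε_j)²). -/
lemma stability_aux (Δ ε : ℕ → ℝ) (c : ℝ) (hc : 0 < c)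
    (hΔ : ∀ t, 0 ≤ Δ t) (h0 : Δ 0 = 0)
    (hε : ∀ t, 0 ≤ ε t)
    (hrec : ∀ t : ℕ, 1 ≤ t → ∀ p : ℝ, 0 < p →
      (Δ t) ^ 2 ≤ (1 + p) ^ (ε t) * (Δ (t - 1)) ^ 2 + c ^ 2 * (1 + ε t / p))
    (p : ℝ) (hp : 0 < p) :
    ∀ t : ℕ, (Δ t) ^ 2 ≤ (1 + p) ^ (∑ j ∈ Finset.Icc 1 t, ε j) * c ^ 2 *
      (t + (∑ j ∈ Finset.Icc 1 t, ε j) / p) := by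
  intro t
  induction t with
  | zero => simp [h0]
  | succ n ih =>
      have hb : (1:ℝ) < 1 + p := by linarith
      have hb0 : (0:ℝ) < 1 + p := by linarith
      set Sn := ∑ j ∈ Finset.Icc 1 n, ε j with hSn
      have hSnn : 0 ≤ Sn := Finset.sum_nonneg fun j _ => hε j
      have hsum : ∑ j ∈ Finset.Icc 1 (n+1), ε j = Sn + ε (n+1) := by
        rw [Finset.sum_Icc_succ_top (Nat.le_add_left 1 n)]
      have hrec' := hrec (n+1) (Nat.le_add_left 1 n) p hp
      simp only [Nat.add_sub_cancel] at hrec'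
      have hA1 : (1:ℝ) ≤ (1 + p) ^ (ε (n+1)) :=
        Real.one_le_rpow hb.le (hε (n+1))
      have hB1 : (1:ℝ) ≤ (1 + p) ^ (Sn + ε (n+1)) :=
        Real.one_le_rpow hb.le (add_nonneg hSnn (hε _))
      have hsplit : (1 + p) ^ (Sn + ε (n+1)) =
          (1 + p) ^ Sn * (1 + p) ^ (ε (n+1)) := Real.rpow_add hb0 _ _
      have hpow_nonneg : 0 ≤ (1 + p) ^ Sn := (Real.rpow_pos_of_pos hb0 _).le
      have hA0 : 0 ≤ (1 + p) ^ (ε (n+1)) := (Real.rpow_pos_of_pos hb0 _).le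
      rw [hsum]
      calc (Δ (n+1)) ^ 2
          ≤ (1 + p) ^ (ε (n+1)) * (Δ n) ^ 2 + c ^ 2 * (1 + ε (n+1) / p) := hrec'
        _ ≤ (1 + p) ^ (ε (n+1)) * ((1 + p) ^ Sn * c ^ 2 * (n + Sn / p))
              + c ^ 2 * (1 + ε (n+1) / p) := by
            have := mul_le_mul_of_nonneg_left ih hA0
            linarith
        _ ≤ (1 + p) ^ (Sn + ε (n+1)) * c ^ 2 * (n + Sn / p)
              + (1 + p) ^ (Sn + ε (n+1)) * (c ^ 2 * (1 + ε (n+1) / p)) := by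
            have h1 : (1 + p) ^ (ε (n+1)) * ((1 + p) ^ Sn * c ^ 2 * (n + Sn / p))
                = (1 + p) ^ (Sn + ε (n+1)) * c ^ 2 * (n + Sn / p) := by
              rw [hsplit]; ring
            have h2 : c ^ 2 * (1 + ε (n+1) / p)
                ≤ (1 + p) ^ (Sn + ε (n+1)) * (c ^ 2 * (1 + ε (n+1) / p)) := by
              have hnn : 0 ≤ c ^ 2 * (1 + ε (n+1) / p) :=
                mul_nonneg (sq_nonneg c) (by have := div_nonneg (hε (n+1)) hp.le; linarith)
              nlinarith
            linarith [h1.ge, h2]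
        _ = (1 + p) ^ (Sn + ε (n+1)) * c ^ 2 * (↑(n+1) + (Sn + ε (n+1)) / p) := by
            push_cast
            field_simp
            ring

theorem stability_unrolling_nonsmooth (Δ ε : ℕ → ℝ) (c : ℝ) (hc : 0 < c)
    (hΔ : ∀ t, 0 ≤ Δ t) (h0 : Δ 0 = 0)
    (hε : ∀ t, ε t = 0 ∨ ε t = 1)
    (hrec : ∀ t : ℕ, 1 ≤ t → ∀ p : ℝ, 0 < p →
      (Δ t) ^ 2 ≤ (1 + p) ^ (ε t) * (Δ (t - 1)) ^ 2 + c ^ 2 * (1 + ε t / p))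
    (T : ℕ) :
    (Δ T) ^ 2
      ≤ Real.exp 1 * c ^ 2 * (T + (∑ j ∈ Finset.Icc 1 T, ε j) ^ 2) := by
  have hεnn : ∀ t, 0 ≤ ε t := fun t => by rcases hε t with h | h <;> simp [h]
  set S := ∑ j ∈ Finset.Icc 1 T, ε j with hS
  have hSnn : 0 ≤ S := Finset.sum_nonneg fun j _ => hεnn j
  have hexp1 : (1:ℝ) ≤ Real.exp 1 := by
    have := Real.add_one_le_exp (1:ℝ); linarith
  rcases eq_or_lt_of_le hSnn with hS0 | hSpos
  · -- S = 0
    have hb := stability_aux Δ ε c hc hΔ h0 hεnn hrec 1 one_pos T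
    rw [← hS, ← hS0] at hb
    simp only [Real.rpow_zero, one_mul, zero_div, add_zero] at hb
    rw [← hS0]
    have hT : (0:ℝ) ≤ (T:ℝ) := Nat.cast_nonneg T
    nlinarith
  · -- S > 0
    have hp : (0:ℝ) < 1/S := by positivity
    have hb := stability_aux Δ ε c hc hΔ h0 hεnn hrec (1/S) hp T
    rw [← hS] at hb
    have hdiv : S / (1/S) = S ^ 2 := by field_simp
    rw [hdiv] at hb
    have hkey : (1 + 1/S) ^ S ≤ Real.exp 1 := by
      have h1 : (1 + 1/S) ≤ Real.exp (1/S) := by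
        have := Real.add_one_le_exp (1/S); linarith
      have h2 : (1 + 1/S) ^ S ≤ (Real.exp (1/S)) ^ S :=
        Real.rpow_le_rpow (by positivity) h1 hSnn
      have h3 : (Real.exp (1/S)) ^ S = Real.exp 1 := by
        rw [← Real.exp_mul]
        congr 1
        field_simp
      linarith [h2, h3.le]
    calc (Δ T) ^ 2 ≤ (1 + 1/S) ^ S * c ^ 2 * (T + S ^ 2) := hb
      _ ≤ Real.exp 1 * c ^ 2 * (T + S ^ 2) := by
          have hnn : (0:ℝ) ≤ c ^ 2 * (T + S ^ 2) := by positivity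
          nlinarith
end

section
/- Let f : ℝ^d → ℝ be convex with ‖∇f(w)‖ ≤ G, and let w_t = w_{t−1} − η_t g_t where ‖g_t‖ ≤ G and g_t = ∇f_t(w_{t−1}) for convex G-Lipschitz functions f_t. Then for any fixed w and T ≥ 1: Σ_{t=1}^T η_t (f_t(w_{t−2}) − f_t(w)) ≤ (1/2)‖w₀ − w‖² + (G²/2) Σ_{t=1}^T (2η_{t−1}η_t + η_t²), where w_{−1} = w₀ and η₀ = 0. -/
set_option maxHeartbeats 1000000

open Finset

local notation "⟪" x ", " y "⟫" => inner (𝕜 := ℝ) x y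

/-- Gradient inequality for convex differentiable functions. -/
lemma convex_grad_ineq {d : ℕ} {f : EuclideanSpace ℝ (Fin d) → ℝ}
    (hc : ConvexOn ℝ Set.univ f) (hd : Differentiable ℝ f)
    (x y : EuclideanSpace ℝ (Fin d)) :
    f x - f y ≤ ⟪gradient f x, x - y⟫ := by
  set g : ℝ → ℝ := fun t => f (x + t • (y - x)) with hg
  have hgc : ConvexOn ℝ Set.univ g := by
    have h := hc.comp_affineMap (AffineMap.lineMap x y : ℝ →ᵃ[ℝ] EuclideanSpace ℝ (Fin d))
    have he : (f ∘ ⇑(AffineMap.lineMap x y)) = g := by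
      funext t
      simp [g, AffineMap.lineMap_apply, vsub_eq_sub, vadd_eq_add, add_comm]
    rw [he] at h
    simpa using h
  have hline : HasDerivAt (fun t : ℝ => x + t • (y - x)) (y - x) 0 := by
    simpa using ((hasDerivAt_id (0:ℝ)).smul_const (y - x)).const_add x
  have hfd : HasFDerivAt f ((InnerProductSpace.toDual ℝ _) (gradient f x)) (x + (0:ℝ) • (y - x)) := by
    have := (hd (x + (0:ℝ) • (y - x))).hasGradientAt
    rw [hasGradientAt_iff_hasFDerivAt] at this
    simpa using this
  have hgd : HasDerivAt g ⟪gradient f x, y - x⟫ 0 := by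
    have := hfd.comp_hasDerivAt 0 hline
    simpa [g, InnerProductSpace.toDual_apply_apply, Function.comp_def] using this
  have hslope := hgc.le_slope_of_hasDerivAt (Set.mem_univ (0:ℝ)) (Set.mem_univ (1:ℝ))
    one_pos hgd
  have hs : slope g 0 1 = f y - f x := by
    simp [slope_def_field, g]
  rw [hs] at hslope
  have : ⟪gradient f x, x - y⟫ = -⟪gradient f x, y - x⟫ := by
    rw [← inner_neg_right]; congr 1; abel
  linarith [hslope, this.ge, this.le]

theorem sgd_regret_convex {d : ℕ} (f : ℕ → EuclideanSpace ℝ (Fin d) → ℝ) (G : ℝ)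
    (η : ℕ → ℝ) (w : ℕ → EuclideanSpace ℝ (Fin d))
    (hG : 0 ≤ G) (hη0 : η 0 = 0) (hη : ∀ t, 0 ≤ η t)
    (hconv : ∀ t, ConvexOn ℝ Set.univ (f t))
    (hdiff : ∀ t, Differentiable ℝ (f t))
    (hLip : ∀ t, LipschitzWith (Real.toNNReal G) (f t))
    (hgrad : ∀ t v, ‖gradient (f t) v‖ ≤ G)
    (hupd : ∀ t : ℕ, 1 ≤ t → w t = w (t - 1) - η t • gradient (f t) (w (t - 1)))
    (u : EuclideanSpace ℝ (Fin d)) (T : ℕ) (hT : 1 ≤ T) :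
    ∑ t ∈ Finset.Icc 1 T, η t * (f t (w (t - 2)) - f t u)
      ≤ (1 / 2) * ‖w 0 - u‖ ^ 2
        + (G ^ 2 / 2) * ∑ t ∈ Finset.Icc 1 T, (2 * η (t - 1) * η t + (η t) ^ 2) := by
  have key : ∀ t ∈ Finset.Icc 1 T,
      η t * (f t (w (t - 2)) - f t u)
        ≤ (‖w (t-1) - u‖^2 - ‖w t - u‖^2)/2 + G^2/2 * (2 * η (t-1) * η t + (η t)^2) := by
    intro t ht
    have ht1 : 1 ≤ t := (Finset.mem_Icc.mp ht).1
    set g : EuclideanSpace ℝ (Fin d) := gradient (f t) (w (t-1)) with hgdef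
    -- Lipschitz step bound
    have hdist : f t (w (t-2)) - f t (w (t-1)) ≤ G * ‖w (t-2) - w (t-1)‖ := by
      have := (hLip t).dist_le_mul (w (t-2)) (w (t-1))
      rw [Real.coe_toNNReal G hG] at this
      calc f t (w (t-2)) - f t (w (t-1)) ≤ |f t (w (t-2)) - f t (w (t-1))| := le_abs_self _
        _ = dist (f t (w (t-2))) (f t (w (t-1))) := (Real.dist_eq _ _).symm
        _ ≤ G * dist (w (t-2)) (w (t-1)) := this
        _ = G * ‖w (t-2) - w (t-1)‖ := by rw [dist_eq_norm]
    have hstep : ‖w (t-2) - w (t-1)‖ ≤ G * η (t-1) := by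
      rcases eq_or_lt_of_le ht1 with h1 | h2
      · have : t = 1 := h1.symm
        subst this
        simp [hη0]
      · have ht2 : 2 ≤ t := h2
        have h1le : 1 ≤ t - 1 := by omega
        have := hupd (t-1) h1le
        have hsub : t - 1 - 1 = t - 2 := by omega
        rw [hsub] at this
        have : w (t-2) - w (t-1) = η (t-1) • gradient (f (t-1)) (w (t-2)) := by
          rw [this]; abel
        rw [this, norm_smul]
        have := hgrad (t-1) (w (t-2))
        have hnn := hη (t-1)
        calc ‖η (t-1)‖ * ‖gradient (f (t-1)) (w (t-2))‖
            = η (t-1) * ‖gradient (f (t-1)) (w (t-2))‖ := by rw [Real.norm_eq_abs, abs_of_nonneg hnn]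
          _ ≤ η (t-1) * G := by nlinarith [norm_nonneg (gradient (f (t-1)) (w (t-2)))]
          _ = G * η (t-1) := mul_comm _ _
    -- convexity
    have hconvineq : f t (w (t-1)) - f t u ≤ ⟪g, w (t-1) - u⟫ :=
      convex_grad_ineq (hconv t) (hdiff t) (w (t-1)) u
    -- norm identity
    have hwt : w t = w (t-1) - η t • g := hupd t ht1
    have hnorm : ‖w t - u‖^2 = ‖w (t-1) - u‖^2 - 2 * (η t * ⟪w (t-1) - u, g⟫) + (η t)^2 * ‖g‖^2 := by
      have : w t - u = (w (t-1) - u) - η t • g := by rw [hwt]; abel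
      rw [this, norm_sub_sq_real, real_inner_smul_right, norm_smul, mul_pow,
        Real.norm_eq_abs, sq_abs]
    have hsymm : ⟪w (t-1) - u, g⟫ = ⟪g, w (t-1) - u⟫ := real_inner_comm _ _
    have hgn : ‖g‖^2 ≤ G^2 := by
      have := hgrad t (w (t-1))
      nlinarith [norm_nonneg g]
    have hηt := hη t
    have hηt1 := hη (t-1)
    have hinner : η t * ⟪g, w (t-1) - u⟫
        ≤ (‖w (t-1) - u‖^2 - ‖w t - u‖^2)/2 + (η t)^2 * G^2 / 2 := by
      rw [hsymm] at hnorm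
      linarith [hnorm, mul_le_mul_of_nonneg_left hgn (sq_nonneg (η t))]
    have hA : η t * (f t (w (t-2)) - f t u)
        = η t * (f t (w (t-2)) - f t (w (t-1))) + η t * (f t (w (t-1)) - f t u) := by ring
    have hB : η t * (f t (w (t-2)) - f t (w (t-1))) ≤ G^2 * (η (t-1) * η t) := by
      have h1 : f t (w (t-2)) - f t (w (t-1)) ≤ G * (G * η (t-1)) :=
        hdist.trans (mul_le_mul_of_nonneg_left hstep hG)
      nlinarith [mul_le_mul_of_nonneg_left h1 hηt]
    have hC : η t * (f t (w (t-1)) - f t u) ≤ η t * ⟪g, w (t-1) - u⟫ :=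
      mul_le_mul_of_nonneg_left hconvineq hηt
    have hfin : G^2/2 * (2 * η (t-1) * η t + (η t)^2) = G^2 * (η (t-1) * η t) + (η t)^2 * G^2 / 2 := by ring
    linarith [hA, hB, hC, hinner, hfin]
  have hsum := Finset.sum_le_sum key
  refine hsum.trans ?_
  rw [Finset.sum_add_distrib, ← Finset.mul_sum]
  have htel : ∑ t ∈ Finset.Icc 1 T, (‖w (t-1) - u‖^2 - ‖w t - u‖^2)/2
      ≤ (1/2) * ‖w 0 - u‖^2 := by
    have h1 : Finset.Icc 1 T = Finset.Ico 1 (T+1) := by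
      rw [Finset.Ico_add_one_right_eq_Icc]
    rw [h1, Finset.sum_Ico_eq_sum_range]
    simp only [Nat.add_sub_cancel]
    have h2 : ∀ i : ℕ, (‖w ((1+i)-1) - u‖^2 - ‖w (1+i) - u‖^2)/2
        = (fun k => ‖w k - u‖^2/2) i - (fun k => ‖w k - u‖^2/2) (i+1) := by
      intro i
      have : 1 + i - 1 = i := by omega
      rw [this]
      have : 1 + i = i + 1 := by omega
      rw [this]
      ring
    rw [Finset.sum_congr rfl (fun i _ => h2 i), Finset.sum_range_sub']
    have : (0:ℝ) ≤ ‖w T - u‖^2/2 := by positivity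
    linarith
  linarith
end

section
/- Let F : ℝ^d → ℝ be L-smooth and satisfy the PL condition with parameter μ > 0: 2μ(F(w) − F*) ≤ ‖∇F(w)‖² for all w, where F* = inf F. Suppose (e_j)_{j≥0} with e_j = E[F(w_j)] − F* satisfies e_j ≤ (1 − μη_j) e_{j−1} + 4Lα₀²(η_jη_{j−1} + η_j² + η_jη_{j−1}²) with η_j = 2/(μ(j+1)). Then for all t ≥ 1, e_t ≤ (32Lα₀²/μ²)(1/(t+1) + log(e t)/(μ t(t+1))). -/
set_option maxHeartbeats 1000000


open MeasureTheory

lemma harmonic_le_log (t : ℕ) (ht : 1 ≤ t) :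
    ∑ j ∈ Finset.range t, 1 / ((j : ℝ) + 1) ≤ 1 + Real.log t := by
  induction t with
  | zero => omega
  | succ n ih =>
    rcases Nat.eq_or_lt_of_le ht with h1 | h1
    · simp [← h1]
    · have hn : 1 ≤ n := by omega
      have hn0 : (0:ℝ) < (n:ℝ) := by exact_mod_cast hn
      have hlog : Real.log ((n:ℝ) / ((n:ℝ)+1)) ≤ (n:ℝ)/((n:ℝ)+1) - 1 :=
        Real.log_le_sub_one_of_pos (by positivity)
      have hdiv : Real.log ((n:ℝ) / ((n:ℝ)+1)) = Real.log n - Real.log ((n:ℝ)+1) :=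
        Real.log_div (ne_of_gt hn0) (by positivity)
      have hfrac : (n:ℝ)/((n:ℝ)+1) - 1 = -(1/((n:ℝ)+1)) := by field_simp; ring
      have key : 1/((n:ℝ)+1) ≤ Real.log ((n:ℝ)+1) - Real.log n := by
        rw [hdiv, hfrac] at hlog; linarith
      have := ih hn
      rw [Finset.sum_range_succ]
      push_cast
      linarith

theorem pl_convergence_rate {Ω : Type*} [MeasurableSpace Ω]
    (P : Measure Ω) [IsProbabilityMeasure P] {d : ℕ}
    (F : EuclideanSpace ℝ (Fin d) → ℝ) (L μ α₀ : ℝ)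
    (w : ℕ → Ω → EuclideanSpace ℝ (Fin d)) (e : ℕ → ℝ)
    (hL : 0 < L) (hμ : 0 < μ) (hα : 0 < α₀)
    (hsmooth : ∀ x y, ‖gradient F x - gradient F y‖ ≤ L * ‖x - y‖)
    (hPL : ∀ x, 2 * μ * (F x - ⨅ y, F y) ≤ ‖gradient F x‖ ^ 2)
    (he : ∀ j, e j = (∫ ω, F (w j ω) ∂P) - ⨅ y, F y)
    (hrec : ∀ j : ℕ, 1 ≤ j →
      e j ≤ (1 - μ * (2 / (μ * ((j : ℝ) + 1)))) * e (j - 1)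
        + 4 * L * α₀ ^ 2 * ((2 / (μ * ((j : ℝ) + 1))) * (2 / (μ * (j : ℝ)))
            + (2 / (μ * ((j : ℝ) + 1))) ^ 2
            + (2 / (μ * ((j : ℝ) + 1))) * (2 / (μ * (j : ℝ))) ^ 2))
    (t : ℕ) (ht : 1 ≤ t) :
    e t ≤ (32 * L * α₀ ^ 2 / μ ^ 2)
        * (1 / ((t : ℝ) + 1) + Real.log (Real.exp 1 * t) / (μ * t * ((t : ℝ) + 1))) := by
  set c : ℝ := 4 * L * α₀ ^ 2 with hc
  have hcpos : 0 < c := by positivity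
  have hμ0 : μ ≠ 0 := ne_of_gt hμ
  -- key telescoped bound
  have key : ∀ n : ℕ, 1 ≤ n →
      (n:ℝ) * ((n:ℝ) + 1) * e n ≤ (8*c/μ^2) * n
        + (8*c/μ^3) * ∑ j ∈ Finset.range n, 1 / ((j : ℝ) + 1) := by
    intro n hn
    induction n, hn using Nat.le_induction with
    | base =>
      have h := hrec 1 le_rfl
      norm_num at h
      have h0 : 1 - μ * (2 / (μ * 2)) = 0 := by field_simp; norm_num
      rw [h0, zero_mul, zero_add] at h
      have hT : c * (2 / (μ * 2) * (2 / μ) + (2 / (μ * 2)) ^ 2 + 2 / (μ * 2) * (2 / μ) ^ 2)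
          = 3*c/μ^2 + 4*c/μ^3 := by field_simp; ring
      rw [hT] at h
      simp only [Finset.sum_range_one]
      norm_num
      calc 2 * e 1 ≤ 2 * (3*c/μ^2 + 4*c/μ^3) := by linarith
        _ = 6*c/μ^2 + 8*c/μ^3 := by ring
        _ ≤ 8*c/μ^2 + 8*c/μ^3 := by
            gcongr
            linarith
    | succ n hn ih =>
      have hn0 : (0:ℝ) < (n:ℝ) := by exact_mod_cast hn
      have h := hrec (n+1) (by omega)
      have hidx : n + 1 - 1 = n := rfl
      rw [hidx] at h
      push_cast at h
      have hcoef : 1 - μ * (2 / (μ * ((n:ℝ) + 1 + 1))) = (n:ℝ) / ((n:ℝ) + 2) := by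
        field_simp; ring
      have hT : c * (2 / (μ * ((n:ℝ) + 1 + 1)) * (2 / (μ * ((n:ℝ)+1)))
            + (2 / (μ * ((n:ℝ) + 1 + 1))) ^ 2
            + 2 / (μ * ((n:ℝ) + 1 + 1)) * (2 / (μ * ((n:ℝ)+1))) ^ 2)
          = c * (4/(μ^2*((n:ℝ)+1)*((n:ℝ)+2)) + 4/(μ^2*((n:ℝ)+2)^2)
            + 8/(μ^3*((n:ℝ)+1)^2*((n:ℝ)+2))) := by
        field_simp; ring
      rw [hcoef, hT] at h
      have hpos : (0:ℝ) < ((n:ℝ)+1) * ((n:ℝ)+2) := by positivity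
      have hmul := mul_le_mul_of_nonneg_left h (le_of_lt hpos)
      have hEq : ((n:ℝ)+1) * ((n:ℝ)+2) * ((n:ℝ) / ((n:ℝ) + 2) * e n)
          = (n:ℝ) * ((n:ℝ)+1) * e n := by field_simp
      have hTbound : ((n:ℝ)+1) * ((n:ℝ)+2) *
          (c * (4/(μ^2*((n:ℝ)+1)*((n:ℝ)+2)) + 4/(μ^2*((n:ℝ)+2)^2)
            + 8/(μ^3*((n:ℝ)+1)^2*((n:ℝ)+2))))
          ≤ 8*c/μ^2 + (8*c/μ^3) * (1/((n:ℝ)+1)) := by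
        have hE : ((n:ℝ)+1) * ((n:ℝ)+2) *
            (c * (4/(μ^2*((n:ℝ)+1)*((n:ℝ)+2)) + 4/(μ^2*((n:ℝ)+2)^2)
              + 8/(μ^3*((n:ℝ)+1)^2*((n:ℝ)+2))))
            = 4*c/μ^2 + (4*c/μ^2) * (((n:ℝ)+1)/((n:ℝ)+2)) + (8*c/μ^3) * (1/((n:ℝ)+1)) := by
          field_simp
        rw [hE]
        have hb : ((n:ℝ)+1)/((n:ℝ)+2) ≤ 1 := by
          rw [div_le_one (by positivity)]; linarith
        have h4 : (0:ℝ) ≤ 4*c/μ^2 := by positivity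
        have h5 := mul_le_mul_of_nonneg_left hb h4
        ring_nf at h5 ⊢
        linarith
      have step : ((n:ℝ)+1) * ((n:ℝ)+2) * e (n+1)
          ≤ (n:ℝ) * ((n:ℝ)+1) * e n + 8*c/μ^2 + (8*c/μ^3) * (1/((n:ℝ)+1)) := by
        calc ((n:ℝ)+1) * ((n:ℝ)+2) * e (n+1)
            ≤ ((n:ℝ)+1) * ((n:ℝ)+2) * ((n:ℝ) / ((n:ℝ) + 2) * e n
              + c * (4/(μ^2*((n:ℝ)+1)*((n:ℝ)+2)) + 4/(μ^2*((n:ℝ)+2)^2)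
                + 8/(μ^3*((n:ℝ)+1)^2*((n:ℝ)+2)))) := hmul
          _ = ((n:ℝ)+1) * ((n:ℝ)+2) * ((n:ℝ) / ((n:ℝ) + 2) * e n)
              + ((n:ℝ)+1) * ((n:ℝ)+2) *
                (c * (4/(μ^2*((n:ℝ)+1)*((n:ℝ)+2)) + 4/(μ^2*((n:ℝ)+2)^2)
                  + 8/(μ^3*((n:ℝ)+1)^2*((n:ℝ)+2)))) := by ring
          _ ≤ (n:ℝ) * ((n:ℝ)+1) * e n + 8*c/μ^2 + (8*c/μ^3) * (1/((n:ℝ)+1)) := by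
              rw [hEq]; linarith
      rw [Finset.sum_range_succ]
      push_cast
      have : ((n:ℝ)+1) * ((n:ℝ)+1+1) * e (n+1) = ((n:ℝ)+1) * ((n:ℝ)+2) * e (n+1) := by ring
      rw [this]
      calc ((n:ℝ)+1) * ((n:ℝ)+2) * e (n+1)
          ≤ (n:ℝ) * ((n:ℝ)+1) * e n + 8*c/μ^2 + (8*c/μ^3) * (1/((n:ℝ)+1)) := step
        _ ≤ (8*c/μ^2) * n + (8*c/μ^3) * ∑ j ∈ Finset.range n, 1/((j:ℝ)+1)
            + 8*c/μ^2 + (8*c/μ^3) * (1/((n:ℝ)+1)) := by linarith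
        _ = (8*c/μ^2) * ((n:ℝ)+1)
            + (8*c/μ^3) * (∑ j ∈ Finset.range n, 1/((j:ℝ)+1) + 1/((n:ℝ)+1)) := by ring
  have hkey := key t ht
  have hsum := harmonic_le_log t ht
  have ht0 : (0:ℝ) < (t:ℝ) := by exact_mod_cast ht
  have hlogt : 0 ≤ Real.log t := Real.log_nonneg (by exact_mod_cast ht)
  have hlog : Real.log (Real.exp 1 * t) = 1 + Real.log t := by
    rw [Real.log_mul (by positivity) (ne_of_gt ht0), Real.log_exp]
  have hRHS : (32 * L * α₀ ^ 2 / μ ^ 2)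
      * (1 / ((t : ℝ) + 1) + Real.log (Real.exp 1 * t) / (μ * t * ((t : ℝ) + 1)))
      = ((8*c/μ^2) * t + (8*c/μ^3) * (1 + Real.log t)) / ((t:ℝ) * ((t:ℝ)+1)) := by
    rw [hlog, hc]; field_simp; ring
  rw [hRHS, le_div_iff₀ (by positivity)]
  have hmono : (8*c/μ^3) * (∑ j ∈ Finset.range t, 1/((j:ℝ)+1))
      ≤ (8*c/μ^3) * (1 + Real.log t) :=
    mul_le_mul_of_nonneg_left hsum (by positivity)
  nlinarith [hkey]
end
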